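/- Let G be a finite group with |G| ≥ 4 and N ⊴ G nilpotent, and suppose k(G/N) ≥ 2^(x·(log₂|G/N|)^(1/t)) for constants 0 < x ≤ 1 and t ≥ 1. Then k(G) ≥ x^t · log₂|G| / (2·(log₂ log₂ |G|)^t). -/

import Mathlib

universe u

lemma aux_center_ne_bot {H : Type*} [Group H] [hn : Group.IsNilpotent H] [Nontrivial H] :
    Subgroup.center H ≠ ⊥ := by
  intro hbot
  have h : ∀ n : ℕ, Subgroup.upperCentralSeries H n = ⊥ := by
    intro n; induction n with
    | zero => exact upperCentralSeries_zero H
    | succ n ih =>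
      rw [Subgroup.eq_bot_iff_forall]
      intro z hz
      rw [mem_upperCentralSeries_succ_iff] at hz
      have hc : z ∈ Subgroup.center H := by
        rw [Subgroup.mem_center_iff]
        intro g
        have h1 : z * g * z⁻¹ * g⁻¹ ∈ Subgroup.upperCentralSeries H n := hz g
        rw [ih, Subgroup.mem_bot] at h1
        exact (commutatorElement_eq_one_iff_mul_comm.mp h1).symm
      rw [hbot, Subgroup.mem_bot] at hc
      exact hc
  obtain ⟨n, hn⟩ := hn.nilpotent'
  rw [h n] at hn
  exact bot_ne_top hn

lemma aux_nat_pow : ∀ e b : ℕ, 1 ≤ e → 1 ≤ b → e * b + 1 ≤ (2 * b) ^ e := by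
  intro e
  induction e with
  | zero => intro b h; omega
  | succ e ih =>
    intro b _ hb
    rcases Nat.eq_zero_or_pos e with rfl | he
    · simpa using by omega
    · have h1 := ih b he hb
      have : (2 * b) ^ (e + 1) = 2 * b * (2 * b) ^ e := by ring
      rw [this]
      nlinarith [pow_pos (by omega : 0 < 2*b) e]


-- Z = image of center of N in G is normal in G
lemma aux_center_map_normal {G : Type u} [Group G] (N : Subgroup G) [hN : N.Normal] :
    ((Subgroup.center ↥N).map N.subtype).Normal := by
  constructor
  intro z hz g
  obtain ⟨x, hxc, rfl⟩ := Subgroup.mem_map.mp hz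
  refine Subgroup.mem_map.mpr ⟨⟨g * (x : G) * g⁻¹, hN.conj_mem _ x.2 g⟩, ?_, rfl⟩
  rw [Subgroup.mem_center_iff]
  intro m
  have hm' : (g⁻¹ * (m : G) * g) ∈ N := by
    have := hN.conj_mem _ m.2 g⁻¹
    simpa using this
  have hx := Subgroup.mem_center_iff.mp hxc ⟨g⁻¹ * (m : G) * g, hm'⟩
  have hxG : (g⁻¹ * (m : G) * g) * (x : G) = (x : G) * (g⁻¹ * (m : G) * g) :=
    congrArg Subtype.val hx
  ext
  show (m : G) * (g * (x : G) * g⁻¹) = (g * (x : G) * g⁻¹) * (m : G)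
  calc (m : G) * (g * (x : G) * g⁻¹) = g * ((g⁻¹ * (m : G) * g) * (x : G)) * g⁻¹ := by group
    _ = g * ((x : G) * (g⁻¹ * (m : G) * g)) * g⁻¹ := by rw [hxG]
    _ = (g * (x : G) * g⁻¹) * (m : G) := by group

variable {G : Type u} [Group G]

lemma aux_carrier_sub {N : Subgroup G} [hN : N.Normal] {g : G} (hg : g ∈ N) :
    (ConjClasses.mk g).carrier ⊆ (N : Set G) := by
  intro y hy
  rw [ConjClasses.mem_carrier_iff_mk_eq, ConjClasses.mk_eq_mk_iff_isConj] at hy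
  obtain ⟨c, hc⟩ := isConj_iff.mp hy.symm
  exact hc ▸ hN.conj_mem _ hg c

lemma aux_mk_ne_one {g : G} (hg : g ≠ 1) : ConjClasses.mk g ≠ ConjClasses.mk 1 := by
  intro h
  rw [ConjClasses.mk_eq_mk_iff_isConj] at h
  obtain ⟨c, hc⟩ := isConj_iff.mp h
  apply hg
  have : g = c⁻¹ * 1 * c := by rw [← hc]; group
  simpa using this

lemma aux_card_Z_le [Finite G] (N Z : Subgroup G) [Z.Normal]
    (hZN : ∀ z ∈ Z, ∀ n ∈ N, n * z = z * n) :
    Nat.card Z ≤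
      Nat.card {c : ConjClasses G // c.carrier ⊆ (Z : Set G) ∧ c ≠ ConjClasses.mk 1}
        * N.index + 1 := by
  classical
  choose rep hrep using fun c : ConjClasses G => c.exists_rep
  have hconj : ∀ z : G, IsConj (rep (ConjClasses.mk z)) z := fun z =>
    ConjClasses.mk_eq_mk_iff_isConj.mp (hrep (ConjClasses.mk z))
  choose conjw hconjw using fun z : G => isConj_iff.mp (hconj z)
  set f : ↥Z → ({c : ConjClasses G // c.carrier ⊆ (Z : Set G) ∧ c ≠ ConjClasses.mk 1}
      × (G ⧸ N)) ⊕ Unit := fun z =>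
    if h : (z : G) = 1 then Sum.inr () else
      Sum.inl ⟨⟨ConjClasses.mk (z : G), aux_carrier_sub z.2, aux_mk_ne_one h⟩,
        QuotientGroup.mk (conjw (z : G))⟩ with hf
  have hinj : Function.Injective f := by
    intro z₁ z₂ h
    by_cases h1 : (z₁ : G) = 1 <;> by_cases h2 : (z₂ : G) = 1
    · exact Subtype.ext (h1.trans h2.symm)
    · simp only [hf] at h; rw [dif_pos h1, dif_neg h2] at h; exact absurd h (by simp)
    · simp only [hf] at h; rw [dif_neg h1, dif_pos h2] at h; exact absurd h (by simp)
    · simp only [hf] at h; rw [dif_neg h1, dif_neg h2] at h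
      have h' := Sum.inl.inj h
      have hcl : ConjClasses.mk (z₁ : G) = ConjClasses.mk (z₂ : G) :=
        congrArg (fun p => (p.1 : ConjClasses G)) h'
      have hcos : (QuotientGroup.mk (conjw (z₁ : G)) : G ⧸ N)
          = QuotientGroup.mk (conjw (z₂ : G)) := congrArg Prod.snd h'
      have hrz : rep (ConjClasses.mk (z₁ : G)) ∈ Z := by
        have hm : rep (ConjClasses.mk (z₁ : G)) ∈ (ConjClasses.mk (z₁ : G)).carrier := by
          rw [ConjClasses.mem_carrier_iff_mk_eq]; exact hrep _
        exact aux_carrier_sub z₁.2 hm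
      have hn : (conjw (z₁ : G))⁻¹ * conjw (z₂ : G) ∈ N := QuotientGroup.eq.mp hcos
      have e1 : conjw (z₁ : G) * rep (ConjClasses.mk (z₁ : G)) * (conjw (z₁ : G))⁻¹ = z₁ :=
        hconjw _
      have e2 : conjw (z₂ : G) * rep (ConjClasses.mk (z₂ : G)) * (conjw (z₂ : G))⁻¹ = z₂ :=
        hconjw _
      rw [← hcl] at e2
      set r := rep (ConjClasses.mk (z₁ : G))
      set g₁ := conjw (z₁ : G)
      set g₂ := conjw (z₂ : G)
      have hcomm : (g₁⁻¹ * g₂) * r = r * (g₁⁻¹ * g₂) := hZN r hrz _ hn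
      apply Subtype.ext
      calc (z₁ : G) = g₁ * r * g₁⁻¹ := e1.symm
        _ = g₂ * r * g₂⁻¹ := by
            calc g₁ * r * g₁⁻¹ = g₁ * (r * (g₁⁻¹ * g₂)) * g₂⁻¹ := by group
              _ = g₁ * (g₁⁻¹ * g₂ * r) * g₂⁻¹ := by rw [hcomm]
              _ = g₂ * r * g₂⁻¹ := by group
        _ = z₂ := e2
  have := Nat.card_le_card_of_injective f hinj
  simpa [Nat.card_sum, Nat.card_prod, Subgroup.index_eq_card] using this

lemma aux_count_split [Finite G] (N Z : Subgroup G) [N.Normal] [Z.Normal] (hZle : Z ≤ N) :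
    Nat.card {c' : ConjClasses (G ⧸ Z) //
        c'.carrier ⊆ ((N.map (QuotientGroup.mk' Z) : Subgroup (G ⧸ Z)) : Set (G ⧸ Z))}
      + Nat.card {c : ConjClasses G // c.carrier ⊆ (Z : Set G) ∧ c ≠ ConjClasses.mk 1}
    ≤ Nat.card {c : ConjClasses G // c.carrier ⊆ (N : Set G)} := by
  classical
  set Q := G ⧸ Z with hQ
  set N' : Subgroup Q := N.map (QuotientGroup.mk' Z) with hN'
  have hmapmk : ∀ g : G, ConjClasses.map (QuotientGroup.mk' Z) (ConjClasses.mk g)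
      = ConjClasses.mk (QuotientGroup.mk' Z g) := fun g => rfl
  have hlift : ∀ c' : {c' : ConjClasses Q // c'.carrier ⊆ (N' : Set Q)},
      ∃ n : G, n ∈ N ∧ ConjClasses.mk (QuotientGroup.mk' Z n) = (c' : ConjClasses Q) := by
    rintro ⟨c', hc'⟩
    obtain ⟨q, hq⟩ := c'.exists_rep
    have hqm : q ∈ c'.carrier := by rw [ConjClasses.mem_carrier_iff_mk_eq]; exact hq
    obtain ⟨n, hn, hnq⟩ := Subgroup.mem_map.mp (hc' hqm)
    exact ⟨n, hn, by rw [hnq]; exact hq⟩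
  choose lift hliftN hliftmk using hlift
  have hmapZ : ∀ c : ConjClasses G, c.carrier ⊆ (Z : Set G) →
      ConjClasses.map (QuotientGroup.mk' Z) c = ConjClasses.mk 1 := by
    intro c hc
    obtain ⟨z, hz⟩ := c.exists_rep
    have hzZ : z ∈ Z := hc (by rw [ConjClasses.mem_carrier_iff_mk_eq]; exact hz)
    rw [← hz, hmapmk]
    congr 1
    exact (QuotientGroup.eq_one_iff z).mpr hzZ
  set f : ({c' : ConjClasses Q // c'.carrier ⊆ (N' : Set Q)} ⊕
      {c : ConjClasses G // c.carrier ⊆ (Z : Set G) ∧ c ≠ ConjClasses.mk 1}) →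
      {c : ConjClasses G // c.carrier ⊆ (N : Set G)} := fun s =>
    Sum.elim (fun (c' : {c' : ConjClasses Q // c'.carrier ⊆ (N' : Set Q)}) =>
      if h : (c' : ConjClasses Q) = ConjClasses.mk 1 then
        ⟨ConjClasses.mk 1, aux_carrier_sub N.one_mem⟩
      else ⟨ConjClasses.mk (lift c'), aux_carrier_sub (hliftN c')⟩)
      (fun (c : {c : ConjClasses G // c.carrier ⊆ (Z : Set G) ∧ c ≠ ConjClasses.mk 1}) =>
        ⟨(c : ConjClasses G), c.2.1.trans hZle⟩) s with hf
  have hinj : Function.Injective f := by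
    rintro (c₁ | c₁) (c₂ | c₂) h <;> simp only [hf, Sum.elim_inl, Sum.elim_inr] at h
    · by_cases h1 : (c₁ : ConjClasses Q) = ConjClasses.mk 1 <;>
        by_cases h2 : (c₂ : ConjClasses Q) = ConjClasses.mk 1
      · exact congrArg Sum.inl (Subtype.ext (h1.trans h2.symm))
      · exfalso
        rw [dif_pos h1, dif_neg h2] at h
        have hval : (ConjClasses.mk 1 : ConjClasses G) = ConjClasses.mk (lift c₂) :=
          congrArg Subtype.val h
        apply h2
        have := congrArg (ConjClasses.map (QuotientGroup.mk' Z)) hval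
        rw [hmapmk, hmapmk, map_one] at this
        rw [hliftmk c₂] at this
        exact this.symm
      · exfalso
        rw [dif_neg h1, dif_pos h2] at h
        have hval : ConjClasses.mk (lift c₁) = (ConjClasses.mk 1 : ConjClasses G) :=
          congrArg Subtype.val h
        apply h1
        have := congrArg (ConjClasses.map (QuotientGroup.mk' Z)) hval
        rw [hmapmk, hmapmk, map_one] at this
        rw [hliftmk c₁] at this
        exact this
      · rw [dif_neg h1, dif_neg h2] at h
        have hval : ConjClasses.mk (lift c₁) = ConjClasses.mk (lift c₂) :=
          congrArg Subtype.val h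
        apply congrArg Sum.inl
        apply Subtype.ext
        rw [← hliftmk c₁, ← hliftmk c₂, ← hmapmk, ← hmapmk, hval]
    · exfalso
      by_cases h1 : (c₁ : ConjClasses Q) = ConjClasses.mk 1
      · rw [dif_pos h1] at h
        have hval : (ConjClasses.mk 1 : ConjClasses G) = (c₂ : ConjClasses G) :=
          congrArg Subtype.val h
        exact c₂.2.2 hval.symm
      · rw [dif_neg h1] at h
        have hval : ConjClasses.mk (lift c₁) = (c₂ : ConjClasses G) :=
          congrArg Subtype.val h
        apply h1
        rw [← hliftmk c₁, ← hmapmk, hval]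
        exact hmapZ _ c₂.2.1
    · exfalso
      by_cases h2 : (c₂ : ConjClasses Q) = ConjClasses.mk 1
      · rw [dif_pos h2] at h
        have hval : (c₁ : ConjClasses G) = (ConjClasses.mk 1 : ConjClasses G) :=
          congrArg Subtype.val h
        exact c₁.2.2 hval
      · rw [dif_neg h2] at h
        have hval : (c₁ : ConjClasses G) = ConjClasses.mk (lift c₂) :=
          congrArg Subtype.val h
        apply h2
        rw [← hliftmk c₂, ← hmapmk, ← hval]
        exact hmapZ _ c₁.2.1
    · have hval := congrArg (Subtype.val (p := fun c : ConjClasses G =>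
        c.carrier ⊆ (N : Set G))) h
      exact congrArg Sum.inr (Subtype.ext hval)
  have := Nat.card_le_card_of_injective f hinj
  simpa [Nat.card_sum] using this

theorem aux_key : ∀ (n : ℕ) (G : Type u) [Group G] [Finite G] (N : Subgroup G) [N.Normal],
    Nat.card ↥N = n → Group.IsNilpotent ↥N →
    Nat.card ↥N ≤ (2 * N.index) ^
      (Nat.card {c : ConjClasses G // c.carrier ⊆ (N : Set G)} - 1) := by
  intro n
  induction n using Nat.strong_induction_on with
  | _ n ih =>
  intro G _ _ N _ hcard hnil
  have hidxpos : 1 ≤ N.index := Nat.one_le_iff_ne_zero.mpr Subgroup.index_ne_zero_of_finite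
  rcases le_or_gt (Nat.card ↥N) 1 with hle | hgt
  · exact hle.trans (Nat.one_le_pow _ _ (by omega))
  · have hNnontriv : Nontrivial ↥N := Finite.one_lt_card_iff_nontrivial.mp hgt
    have hZNbot : Subgroup.center ↥N ≠ ⊥ := @aux_center_ne_bot ↥N _ hnil hNnontriv
    set Z : Subgroup G := (Subgroup.center ↥N).map N.subtype with hZ
    have hZle : Z ≤ N := Subgroup.map_subtype_le _
    have hZnormal : Z.Normal := aux_center_map_normal N
    have hZbot : Z ≠ ⊥ := fun h =>
      hZNbot ((Subgroup.map_eq_bot_iff_of_injective _ (Subgroup.subtype_injective N)).mp h)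
    have hZcard : 2 ≤ Nat.card Z := (Subgroup.one_lt_card_iff_ne_bot Z).mpr hZbot
    have hZN : ∀ z ∈ Z, ∀ m ∈ N, m * z = z * m := by
      rintro z hz m hm
      obtain ⟨w, hw, rfl⟩ := Subgroup.mem_map.mp hz
      exact congrArg Subtype.val (Subgroup.mem_center_iff.mp hw ⟨m, hm⟩)
    set Q := G ⧸ Z with hQdef
    set N' : Subgroup Q := N.map (QuotientGroup.mk' Z) with hN'
    have hN'normal : N'.Normal := Subgroup.Normal.map ‹N.Normal› _ QuotientGroup.mk_surjective
    have hN'nil : Group.IsNilpotent ↥N' :=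
      nilpotent_of_surjective ((QuotientGroup.mk' Z).subgroupMap N)
        (MonoidHom.subgroupMap_surjective (QuotientGroup.mk' Z) N)
    have hidx : N'.index = N.index := by
      rw [Subgroup.index_eq_card, Subgroup.index_eq_card]
      exact Nat.card_congr (QuotientGroup.quotientQuotientEquivQuotient Z N hZle).toEquiv
    -- cardinality splitting
    have hkerf : ((QuotientGroup.mk' Z).subgroupMap N).ker = Z.subgroupOf N := by
      ext x
      rw [MonoidHom.mem_ker, Subgroup.mem_subgroupOf]
      have hcoe : ((QuotientGroup.mk' Z).subgroupMap N x : Q) = QuotientGroup.mk' Z (x : G) :=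
        rfl
      constructor
      · intro h
        have h2 : ((QuotientGroup.mk' Z).subgroupMap N x : Q) = 1 := congrArg Subtype.val h
        rw [hcoe] at h2
        simpa [QuotientGroup.eq_one_iff] using h2
      · intro h
        apply Subtype.ext
        show ((QuotientGroup.mk' Z).subgroupMap N x : Q) = 1
        rw [hcoe]
        simpa [QuotientGroup.eq_one_iff] using h
    have hcards : Nat.card ↥N = Nat.card ↥N' * Nat.card ↥Z := by
      have h1 := Subgroup.card_eq_card_quotient_mul_card_subgroup
        (((QuotientGroup.mk' Z).subgroupMap N).ker)
      have h2 : Nat.card (↥N ⧸ ((QuotientGroup.mk' Z).subgroupMap N).ker) = Nat.card ↥N' :=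
        Nat.card_congr (QuotientGroup.quotientKerEquivOfSurjective _
          (MonoidHom.subgroupMap_surjective (QuotientGroup.mk' Z) N)).toEquiv
      have h3 : Nat.card ↥(((QuotientGroup.mk' Z).subgroupMap N).ker) = Nat.card ↥Z := by
        rw [hkerf]
        exact Nat.card_congr (Subgroup.subgroupOfEquivOfLe hZle).toEquiv
      rw [h1, h2, h3]
    have hN'lt : Nat.card ↥N' < n := by
      rw [← hcard, hcards]
      have hN'pos : 0 < Nat.card ↥N' := Nat.card_pos
      nlinarith
    have hIH := ih (Nat.card ↥N') hN'lt Q N' rfl hN'nil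
    -- counting
    set κ := Nat.card {c : ConjClasses G // c.carrier ⊆ (N : Set G)} with hκ
    set κ' := Nat.card {c' : ConjClasses Q // c'.carrier ⊆ (N' : Set Q)} with hκ'
    set e := Nat.card {c : ConjClasses G // c.carrier ⊆ (Z : Set G) ∧ c ≠ ConjClasses.mk 1}
      with he
    have hsplit : κ' + e ≤ κ := aux_count_split N Z hZle
    have hZce : Nat.card ↥Z ≤ e * N.index + 1 := aux_card_Z_le N Z hZN
    have he1 : 1 ≤ e := by
      have : Nat.card ↥Z ≥ 2 := hZcard
      by_contra h
      push_neg at h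
      interval_cases e <;> omega
    have hκ'1 : 1 ≤ κ' := by
      have : Nonempty {c' : ConjClasses Q // c'.carrier ⊆ (N' : Set Q)} := by
        refine ⟨⟨ConjClasses.mk 1, ?_⟩⟩
        intro y hy
        rw [ConjClasses.mem_carrier_iff_mk_eq, ConjClasses.mk_eq_mk_iff_isConj] at hy
        have : y = 1 := by
          obtain ⟨c, hc⟩ := isConj_iff.mp hy.symm
          rw [← hc]; group
        rw [this]; exact N'.one_mem
      exact Nat.card_pos
    -- assemble
    have hb : 1 ≤ 2 * N.index := by omega
    calc Nat.card ↥N = Nat.card ↥N' * Nat.card ↥Z := hcards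
      _ ≤ (2 * N.index) ^ (κ' - 1) * (e * N.index + 1) := by
          rw [hidx] at hIH
          exact Nat.mul_le_mul hIH hZce
      _ ≤ (2 * N.index) ^ (κ' - 1) * (2 * N.index) ^ e := by
          exact Nat.mul_le_mul_left _ (aux_nat_pow e N.index he1 hidxpos)
      _ = (2 * N.index) ^ (κ' - 1 + e) := by rw [pow_add]
      _ ≤ (2 * N.index) ^ (κ - 1) := by
          apply Nat.pow_le_pow_right (by omega)
          omega


/-- Pyber's lemma: if `|G| ≥ 4`, `N ⊴ G` nilpotent and
`k(G/N) ≥ 2^(x·(log₂|G/N|)^(1/t))` with `0 < x ≤ 1`, `t ≥ 1`, then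
`k(G) ≥ xᵗ·log₂|G| / (2·(log₂log₂|G|)ᵗ)`. -/
theorem stmt3 (G : Type*) [Group G] [Finite G] (N : Subgroup G) [N.Normal]
    (hG : 4 ≤ Nat.card G) (hnil : Group.IsNilpotent N) (x t : ℝ)
    (hx0 : 0 < x) (hx1 : x ≤ 1) (ht : 1 ≤ t)
    (hQ : (Nat.card (ConjClasses (G ⧸ N)) : ℝ) ≥
      2 ^ (x * (Real.logb 2 (Nat.card (G ⧸ N))) ^ (1 / t))) :
    (Nat.card (ConjClasses G) : ℝ) ≥
      x ^ t * Real.logb 2 (Nat.card G) /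
        (2 * (Real.logb 2 (Real.logb 2 (Nat.card G))) ^ t) := by
  classical
  have ht0 : (0:ℝ) < t := lt_of_lt_of_le one_pos ht
  have hb1 : 1 ≤ N.index := Nat.one_le_iff_ne_zero.mpr Subgroup.index_ne_zero_of_finite
  have hbQ : Nat.card (G ⧸ N) = N.index := (Subgroup.index_eq_card N).symm
  have hNpos : 1 ≤ Nat.card ↥N := Nat.one_le_iff_ne_zero.mpr Nat.card_pos.ne'
  have hn : Nat.card ↥N * N.index = Nat.card G := Subgroup.card_mul_index N
  have hkQ : (Nat.card (ConjClasses (G ⧸ N)) : ℝ) ≤ (Nat.card (ConjClasses G) : ℝ) := by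
    exact_mod_cast Nat.card_le_card_of_surjective (ConjClasses.map (QuotientGroup.mk' N))
      (ConjClasses.map_surjective QuotientGroup.mk_surjective)
  set L : ℝ := Real.logb 2 (Nat.card G) with hL
  have hG4 : (4:ℝ) ≤ (Nat.card G : ℝ) := by exact_mod_cast hG
  have hL2 : 2 ≤ L := by
    have h4 : Real.logb 2 4 = 2 := by
      rw [show (4:ℝ) = 2 ^ (2:ℕ) by norm_num, Real.logb_pow, Real.logb_self_eq_one one_lt_two]
      norm_num
    have h5 : Real.logb 2 4 ≤ Real.logb 2 (Nat.card G : ℝ) :=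
      Real.logb_le_logb_of_le one_lt_two (by norm_num) hG4
    rw [← hL, h4] at h5
    exact h5
  set ℓ : ℝ := Real.logb 2 L with hℓ
  have hℓ1 : 1 ≤ ℓ := by
    rw [hℓ, ← Real.logb_self_eq_one (b := 2) one_lt_two]
    exact Real.logb_le_logb_of_le one_lt_two (by norm_num) hL2
  set β : ℝ := Real.logb 2 (N.index) with hβ
  have hβ0 : 0 ≤ β := Real.logb_nonneg one_lt_two (by exact_mod_cast hb1)
  have hℓx : (0:ℝ) < ℓ / x := by positivity
  have hxt1 : x ^ t ≤ 1 := Real.rpow_le_one hx0.le hx1 ht0.le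
  have hℓt1 : 1 ≤ ℓ ^ t := Real.one_le_rpow hℓ1 ht0.le
  have hden : (0:ℝ) < 2 * ℓ ^ t := by positivity
  rw [ge_iff_le, div_le_iff₀ hden]
  rcases le_or_gt ((ℓ / x) ^ t) β with hcase | hcase
  · -- big quotient case
    have h1 : ℓ / x ≤ β ^ (1/t) := by
      have h2 := Real.rpow_le_rpow (Real.rpow_nonneg hℓx.le t) hcase
        (by positivity : (0:ℝ) ≤ 1/t)
      rwa [← Real.rpow_mul hℓx.le, mul_one_div_cancel ht0.ne', Real.rpow_one] at h2
    have h2 : ℓ ≤ x * β ^ (1/t) := by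
      have h3 := mul_le_mul_of_nonneg_left h1 hx0.le
      rwa [mul_div_cancel₀ _ hx0.ne'] at h3
    have h3 : L ≤ (2:ℝ) ^ (x * β ^ (1/t)) := by
      have hLpos : (0:ℝ) < L := by linarith
      calc L = (2:ℝ) ^ (Real.logb 2 L) := (Real.rpow_logb two_pos (by norm_num) hLpos).symm
        _ ≤ _ := Real.rpow_le_rpow_of_exponent_le one_le_two h2
    have h4 : L ≤ (Nat.card (ConjClasses G) : ℝ) := by
      refine h3.trans (le_trans ?_ (le_trans hQ hkQ))
      rw [hbQ]
    nlinarith [mul_le_mul_of_nonneg_right hxt1 (by linarith : (0:ℝ) ≤ L),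
      mul_le_mul_of_nonneg_left hℓt1 (by linarith : (0:ℝ) ≤ (Nat.card (ConjClasses G) : ℝ))]
  · -- small quotient case
    have hKL := aux_key (Nat.card ↥N) G N rfl hnil
    obtain ⟨κ, hκeq⟩ : ∃ k : ℕ, Nat.card {c : ConjClasses G // c.carrier ⊆ (N : Set G)} = k :=
      ⟨_, rfl⟩
    rw [hκeq] at hKL
    have hκk : (κ : ℝ) ≤ (Nat.card (ConjClasses G) : ℝ) := by
      rw [← hκeq]
      exact_mod_cast Finite.card_subtype_le _
    have hκ1 : 1 ≤ κ := by
      have : Nonempty {c : ConjClasses G // c.carrier ⊆ (N : Set G)} := by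
        refine ⟨⟨ConjClasses.mk 1, ?_⟩⟩
        intro y hy
        rw [ConjClasses.mem_carrier_iff_mk_eq, ConjClasses.mk_eq_mk_iff_isConj] at hy
        obtain ⟨c, hc⟩ := isConj_iff.mp hy.symm
        have : y = 1 := by rw [← hc]; group
        rw [this]; exact N.one_mem
      rw [← hκeq]; exact Nat.one_le_iff_ne_zero.mpr Nat.card_pos.ne'
    -- logarithmic form of the key inequality
    have hlogN : Real.logb 2 (Nat.card ↥N) ≤ ((κ : ℝ) - 1) * (1 + β) := by
      have hcast : ((Nat.card ↥N : ℕ) : ℝ) ≤ (((2 * N.index) ^ (κ - 1) : ℕ) : ℝ) := by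
        exact_mod_cast hKL
      have hlog := Real.logb_le_logb_of_le one_lt_two
        (by exact_mod_cast hNpos : (0:ℝ) < (Nat.card ↥N : ℝ)) hcast
      rw [Nat.cast_pow] at hlog
      rw [Real.logb_pow] at hlog
      have h2b : Real.logb 2 ((2 * N.index : ℕ) : ℝ) = 1 + β := by
        push_cast
        rw [Real.logb_mul (by norm_num) (by positivity : ((N.index : ℝ)) ≠ 0)]
        rw [Real.logb_self_eq_one one_lt_two]
      rw [h2b] at hlog
      refine hlog.trans ?_
      have : ((κ - 1 : ℕ) : ℝ) = (κ : ℝ) - 1 := by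
        rw [Nat.cast_sub hκ1]; norm_num
      rw [this]
    have hLsplit : L = Real.logb 2 (Nat.card ↥N) + β := by
      rw [hL, ← hn]
      push_cast
      rw [Real.logb_mul (by positivity) (by positivity)]
    have hβ1 : (0:ℝ) < 1 + β := by linarith
    have hκge : (L + 1) / (1 + β) ≤ (κ : ℝ) := by
      rw [div_le_iff₀ hβ1]
      nlinarith [hlogN, hLsplit]
    have hone : (1:ℝ) ≤ (ℓ / x) ^ t := Real.one_le_rpow
      (by rw [le_div_iff₀ hx0]; nlinarith) ht0.le
    have hdiv : (ℓ / x) ^ t = ℓ ^ t / x ^ t := Real.div_rpow (by linarith) hx0.le t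
    -- x^t * L ≤ κ * (2 ℓ^t) ≤ k * (2 ℓ^t)
    have hxtpos : (0:ℝ) < x ^ t := Real.rpow_pos_of_pos hx0 t
    have hmain : x ^ t * L ≤ (κ : ℝ) * (2 * ℓ ^ t) := by
      have hchain : (L + 1) ≤ (κ : ℝ) * (1 + β) := by
        rw [div_le_iff₀ hβ1] at hκge; linarith
      have hκpos : (0:ℝ) ≤ (κ : ℝ) := by positivity
      have h1β : 1 + β ≤ 2 * (ℓ ^ t / x ^ t) := by
        rw [← hdiv]; linarith
      have hk2 : L + 1 ≤ (κ : ℝ) * (2 * (ℓ ^ t / x ^ t)) :=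
        hchain.trans (mul_le_mul_of_nonneg_left h1β hκpos)
      have hk3 := mul_le_mul_of_nonneg_right hk2 hxtpos.le
      have hsimp : ((κ : ℝ) * (2 * (ℓ ^ t / x ^ t))) * x ^ t = (κ : ℝ) * (2 * ℓ ^ t) := by
        field_simp
      calc x ^ t * L = L * x ^ t := mul_comm _ _
        _ ≤ (L + 1) * x ^ t := mul_le_mul_of_nonneg_right (by linarith) hxtpos.le
        _ ≤ ((κ : ℝ) * (2 * (ℓ ^ t / x ^ t))) * x ^ t := hk3
        _ = (κ : ℝ) * (2 * ℓ ^ t) := hsimp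
    refine hmain.trans ?_
    exact mul_le_mul_of_nonneg_right hκk hden.le
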